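/- arXiv:1611.01346 — 2 statements merged into one kernel-verified Lean document; each statement's English description precedes it below -/
import Mathlib

section
/- Let m > 1 and γ a permutation of (F_2)^m with γ(0)=0. If some component function of γ is affine (i.e. the nonlinearity of γ is 0), then γ is not strongly 1-anti-invariant: there exist proper subspaces U, W of (F_2)^m of dimension m-1 with γ(U) = W. -/
lemma zmod2_eq_one {x : ZMod 2} (h : x ≠ 0) : x = 1 := by
  revert x; decide

/-- The dot-product linear functional. -/
def dotL (m : ℕ) (a : Fin m → ZMod 2) : (Fin m → ZMod 2) →ₗ[ZMod 2] ZMod 2 where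
  toFun x := ∑ i, a i * x i
  map_add' x y := by simp [mul_add, Finset.sum_add_distrib]
  map_smul' c x := by simp [Finset.mul_sum, mul_left_comm]

lemma finrank_ker_dotL (m : ℕ) (a : Fin m → ZMod 2) (ha : a ≠ 0) :
    Module.finrank (ZMod 2) (LinearMap.ker (dotL m a)) = m - 1 := by
  have hsurj : Function.Surjective (dotL m a) := by
    obtain ⟨i, hi⟩ := Function.ne_iff.mp ha
    simp only [Pi.zero_apply] at hi
    have hai : a i = 1 := zmod2_eq_one hi
    intro z
    refine ⟨z • Pi.single i 1, ?_⟩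
    simp [dotL, Finset.mul_sum, mul_left_comm, Pi.single_apply, hai]
  have h1 : Module.finrank (ZMod 2) (LinearMap.range (dotL m a)) = 1 := by
    rw [LinearMap.range_eq_top.mpr hsurj]
    simp
  have h2 := LinearMap.finrank_range_add_finrank_ker (dotL m a)
  rw [h1] at h2
  have h3 : Module.finrank (ZMod 2) (Fin m → ZMod 2) = m := by simp
  omega

theorem stmt_15 (m : ℕ) (hm : 1 < m) (γ : Equiv.Perm (Fin m → ZMod 2))
    (h0 : γ 0 = 0)
    (haff : ∃ v : Fin m → ZMod 2, v ≠ 0 ∧ ∃ (a : Fin m → ZMod 2) (c : ZMod 2),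
      ∀ x : Fin m → ZMod 2, ∑ i, v i * γ x i = (∑ i, a i * x i) + c) :
    ∃ U W : Submodule (ZMod 2) (Fin m → ZMod 2),
      Module.finrank (ZMod 2) U = m - 1 ∧ Module.finrank (ZMod 2) W = m - 1 ∧
      (fun x => γ x) '' (U : Set (Fin m → ZMod 2)) = W := by
  obtain ⟨v, hv, a, c, hvac⟩ := haff
  -- c = 0
  have hc : c = 0 := by
    have := hvac 0
    simp [h0] at this
    exact this.symm
  have key : ∀ x, ∑ i, v i * γ x i = ∑ i, a i * x i := by
    intro x; have := hvac x; rwa [hc, add_zero] at this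
  -- a ≠ 0
  have ha : a ≠ 0 := by
    rintro rfl
    obtain ⟨i, hi⟩ := Function.ne_iff.mp hv
    simp only [Pi.zero_apply] at hi
    have hvi : v i = 1 := zmod2_eq_one hi
    have := key (γ.symm (Pi.single i 1))
    simp [Pi.single_apply, hvi] at this
  refine ⟨LinearMap.ker (dotL m a), LinearMap.ker (dotL m v),
    finrank_ker_dotL m a ha, finrank_ker_dotL m v hv, ?_⟩
  ext y
  constructor
  · rintro ⟨x, hx, rfl⟩
    have hx' : dotL m a x = 0 := hx
    show dotL m v (γ x) = 0
    show ∑ i, v i * γ x i = 0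
    rw [key]; exact hx'
  · intro hy
    refine ⟨γ.symm y, ?_, by simp⟩
    have hy' : ∑ i, v i * y i = 0 := hy
    show dotL m a (γ.symm y) = 0
    show ∑ i, a i * γ.symm y i = 0
    rw [← key]
    simp [hy']
end

section
/- Let γ_j be a permutation of (F_2)^m that is differentially 2^r-uniform (1 < r < m) and strongly (r-1)-anti-invariant, and suppose U, W are subspaces of (F_2)^m with γ_j(U) = W, U nontrivial and proper, and for all nonzero u ∈ U and all v ∈ (F_2)^m, γ_j(u+v) + γ_j(v) ∈ W. Then a contradiction follows; i.e., no such pair (U, W) exists. -/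
theorem stmt_18 (m r : ℕ) (hr1 : 1 < r) (hrm : r < m)
    (γ : Equiv.Perm (Fin m → ZMod 2))
    (huniform : ∀ u : Fin m → ZMod 2, u ≠ 0 → ∀ v : Fin m → ZMod 2,
      (Finset.univ.filter (fun x => γ (x + u) + γ x = v)).card ≤ 2 ^ r)
    (hanti : ∀ U W : Submodule (ZMod 2) (Fin m → ZMod 2),
      (fun x => γ x) '' (U : Set (Fin m → ZMod 2)) = W →
      (Module.finrank (ZMod 2) U = Module.finrank (ZMod 2) W ∧
        Module.finrank (ZMod 2) U < m - r + 1) ∨ (U = ⊤ ∧ W = ⊤))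
    (U W : Submodule (ZMod 2) (Fin m → ZMod 2))
    (hUbot : U ≠ ⊥) (hUtop : U ≠ ⊤)
    (hγU : (fun x => γ x) '' (U : Set (Fin m → ZMod 2)) = W)
    (hder : ∀ u ∈ U, u ≠ 0 → ∀ v : Fin m → ZMod 2, γ (u + v) + γ v ∈ W) :
    False := by
  -- get dim W ≤ m - r
  have hrankW : Module.finrank (ZMod 2) W ≤ m - r := by
    rcases hanti U W hγU with ⟨heq, hlt⟩ | ⟨hU, _⟩
    · omega
    · exact absurd hU hUtop
  -- pick nonzero u ∈ U
  obtain ⟨u, huU, hu0⟩ : ∃ u ∈ U, u ≠ 0 := by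
    by_contra h
    push_neg at h
    exact hUbot (by
      ext x
      simp only [Submodule.mem_bot]
      exact ⟨fun hx => h x hx, fun hx => hx ▸ U.zero_mem⟩)
  -- derivative function
  set f : (Fin m → ZMod 2) → (Fin m → ZMod 2) := fun v => γ (u + v) + γ v with hf
  have hfW : ∀ v, f v ∈ W := fun v => hder u huU hu0 v
  have hf0 : ∀ v, f v ≠ 0 := by
    intro v hv
    simp only [hf] at hv
    have h2 : γ (u + v) = -(γ v) := add_eq_zero_iff_eq_neg.mp hv
    have hv' : γ (u + v) = γ v := by
      rw [h2]; funext i; exact CharTwo.neg_eq _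
    have h1 : u + v = v := γ.injective hv'
    exact hu0 (by rwa [add_eq_right] at h1)
  classical
  have hcardW : Fintype.card W = 2 ^ Module.finrank (ZMod 2) W := by
    simpa using Module.card_eq_pow_finrank (K := ZMod 2) (V := W)
  set t : Finset (Fin m → ZMod 2) := (W : Set (Fin m → ZMod 2)).toFinset.erase 0 with ht
  have hmaps : ∀ v ∈ (Finset.univ : Finset (Fin m → ZMod 2)), f v ∈ t := by
    intro v _
    simp [ht, Set.mem_toFinset, hf0 v, hfW v]
  have hfib : ∀ b ∈ t, (Finset.univ.filter (fun v => f v = b)).card ≤ 2 ^ r := by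
    intro b _
    have := huniform u hu0 b
    simpa [hf, add_comm] using this
  have hkey := Finset.card_le_mul_card_image_of_maps_to hmaps (2 ^ r) hfib
  have hcardt : t.card = Fintype.card W - 1 := by
    rw [ht, Finset.card_erase_of_mem (by simp [Set.mem_toFinset])]
    congr 1
    exact Set.toFinset_card _
  have hcardU : (Finset.univ : Finset (Fin m → ZMod 2)).card = 2 ^ m := by
    simp [ZMod.card]
  rw [hcardU] at hkey
  have hpos : 0 < Fintype.card W := Fintype.card_pos
  have htc : t.card + 1 = Fintype.card W := by
    rw [hcardt]; omega
  have h1 : t.card + 1 ≤ 2 ^ (m - r) := by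
    rw [htc, hcardW]
    exact Nat.pow_le_pow_right (by norm_num) hrankW
  have h2 : 2 ^ r * 2 ^ (m - r) = 2 ^ m := by
    rw [← pow_add]; congr 1; omega
  have h3 : (0:ℕ) < 2 ^ r := Nat.pow_pos (by norm_num)
  have h5 : 2 ^ r * (t.card + 1) ≤ 2 ^ m := by
    calc 2 ^ r * (t.card + 1) ≤ 2 ^ r * 2 ^ (m - r) := Nat.mul_le_mul_left _ h1
    _ = 2 ^ m := h2
  rw [Nat.mul_add, mul_one] at h5
  omega
end
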